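/- In the setting of the cohomology determinant lemma (f : L × K × K → R skew-symmetric in the K-variables, bases a of K and b of L, determinant d(f,a,b) ∈ S^{n-2} defined by det(θ(i)) = (-1)^i a_i* d(f,a,b)), for any other bases a' of K and b' of L one has d(f,a',b') = [a'/a]·[b'/b]·d(f,a,b), where [a'/a] ∈ R^× denotes the determinant of the change of basis matrix from a to a'. -/

import Mathlib

open MvPolynomial

lemma det_cons_expand {S : Type*} [CommRing S] {m : ℕ} (v : Fin (m+2) → S)
    (M : Matrix (Fin (m+1)) (Fin (m+2)) S) :
    (Matrix.of (Fin.cons v M) : Matrix (Fin (m+2)) (Fin (m+2)) S).det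
      = ∑ i : Fin (m+2), (-1)^(i:ℕ) * v i * (M.submatrix id i.succAbove).det := by
  rw [Matrix.det_succ_row_zero]
  refine Finset.sum_congr rfl fun j _ => ?_
  have h1 : (Matrix.of (Fin.cons v M) : Matrix (Fin (m+2)) (Fin (m+2)) S) 0 j = v j := rfl
  have h2 : (Matrix.of (Fin.cons v M) : Matrix (Fin (m+2)) (Fin (m+2)) S).submatrix
      Fin.succ j.succAbove = M.submatrix id j.succAbove := by
    ext p q
    simp [Matrix.submatrix_apply]
    rfl
  rw [h1, h2]

lemma cons_mul {S : Type*} [CommRing S] {m : ℕ} (v : Fin (m+2) → S)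
    (M : Matrix (Fin (m+1)) (Fin (m+2)) S) (A : Matrix (Fin (m+2)) (Fin (m+2)) S) :
    (Matrix.of (Fin.cons v M) : Matrix (Fin (m+2)) (Fin (m+2)) S) * A
      = Matrix.of (Fin.cons (Matrix.vecMul v A) (M * A)) := by
  ext p q
  refine Fin.cases ?_ (fun r => ?_) p <;>
    simp [Matrix.mul_apply, Matrix.vecMul, dotProduct] <;> rfl


/-- The embedding of `K* = Hom_R(K,R)` into the symmetric algebra
`S(K*) ≅ R[a_1*,…,a_n*]` (realized as `MvPolynomial (Fin n) R`) determined by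
the basis `a` of `K`:  `φ = ∑ i φ(a_i) a_i* ↦ ∑ i φ(a_i) X i`. -/
noncomputable def dualToPoly {R K : Type*} [CommRing R] [AddCommGroup K] [Module R K]
    {n : ℕ} (a : Module.Basis (Fin n) R K) (φ : Module.Dual R K) : MvPolynomial (Fin n) R :=
  ∑ i : Fin n, MvPolynomial.C (φ (a i)) * MvPolynomial.X i

set_option maxHeartbeats 1000000 in
/-- (Change of basis formula for the cohomology determinant.)
With `f : L × K × K → R` skew-symmetric in the `K`-variables,
`θ(a,b)_{i,j} = g(b_i, a_j) = f(b_i, a_j, ·) ∈ K* ⊆ S(K*)`, and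
`d = d(f,a,b)`, `d' = d(f,a',b')` the determinants characterized by
`det θ(i) = (-1)^i a_i* d` (0-based indices, whence `(-1)^(i+1)`), one has
`d(f,a',b') = [a'/a]·[b'/b]·d(f,a,b)`, where `[a'/a]` is the determinant of
the change of basis matrix (equal to `det (a.toMatrix a')`). -/
theorem cohomology_det_change_of_basis
    {R K L : Type*} [CommRing R] [IsDomain R]
    [AddCommGroup K] [Module R K] [AddCommGroup L] [Module R L]
    {m : ℕ}
    (a a' : Module.Basis (Fin (m + 2)) R K) (b b' : Module.Basis (Fin (m + 1)) R L)
    (f : L →ₗ[R] K →ₗ[R] K →ₗ[R] R)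
    (hskew : ∀ (x : L) (y z : K), f x y z = - f x z y)
    (d d' : MvPolynomial (Fin (m + 2)) R)
    (hd : ∀ i : Fin (m + 2),
      ((Matrix.of fun p q => dualToPoly a (f (b p) (a q))).submatrix id i.succAbove).det
        = (-1) ^ ((i : ℕ) + 1) * dualToPoly a (a.dualBasis i) * d)
    (hd' : ∀ i : Fin (m + 2),
      ((Matrix.of fun p q => dualToPoly a (f (b' p) (a' q))).submatrix id i.succAbove).det
        = (-1) ^ ((i : ℕ) + 1) * dualToPoly a (a'.dualBasis i) * d') :
    d' = MvPolynomial.C (a.toMatrix a').det * MvPolynomial.C (b.toMatrix b').det * d := by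
  classical
  set A : Matrix (Fin (m + 2)) (Fin (m + 2)) R := a.toMatrix a' with hA
  set A2 : Matrix (Fin (m + 2)) (Fin (m + 2)) R := a'.toMatrix a with hA2
  set B : Matrix (Fin (m + 1)) (Fin (m + 1)) R := b.toMatrix b' with hB
  have hAA2 : A * A2 = 1 := a.toMatrix_mul_toMatrix_flip a'
  set θ : Matrix (Fin (m+1)) (Fin (m+2)) (MvPolynomial (Fin (m+2)) R) :=
    Matrix.of fun p q => dualToPoly a (f (b p) (a q)) with hθ
  set θ' : Matrix (Fin (m+1)) (Fin (m+2)) (MvPolynomial (Fin (m+2)) R) :=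
    Matrix.of fun p q => dualToPoly a (f (b' p) (a' q)) with hθ'
  -- change of basis at the level of f-values
  have hfb : ∀ (p : Fin (m+1)) (q : Fin (m+2)) (z : K),
      f (b' p) (a' q) z = ∑ r, ∑ s, B r p * (A s q * f (b r) (a s) z) := by
    intro p q z
    have hbp : b' p = ∑ r, B r p • b r := (b.sum_toMatrix_smul_self b' p).symm
    have haq : a' q = ∑ s, A s q • a s := (a.sum_toMatrix_smul_self a' q).symm
    conv_lhs => rw [hbp, haq]
    simp only [map_sum, map_smul, LinearMap.coe_sum, Finset.sum_apply, LinearMap.smul_apply,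
      smul_eq_mul, Finset.mul_sum]
    rw [Finset.sum_comm]
    exact Finset.sum_congr rfl fun r _ => Finset.sum_congr rfl fun s _ => by ring
  -- θ' = Bᵀ θ A over the polynomial ring
  have hθ'eq : θ' = (B.transpose.map (C : R → MvPolynomial (Fin (m+2)) R)) * θ *
      (A.map (C : R → MvPolynomial (Fin (m+2)) R)) := by
    refine Matrix.ext fun p q => ?_
    simp only [hθ', hθ, Matrix.of_apply, Matrix.mul_apply, Matrix.map_apply,
      Matrix.transpose_apply]
    simp only [hfb, map_sum, map_mul, dualToPoly, Finset.sum_mul, Finset.mul_sum]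
    conv_lhs => rw [Finset.sum_comm]
    conv_rhs => rw [Finset.sum_comm]
    refine Finset.sum_congr rfl fun r _ => ?_
    conv_lhs => rw [Finset.sum_comm]
    exact Finset.sum_congr rfl fun s _ => Finset.sum_congr rfl fun i _ => by ring
  -- dual basis images
  have hXi : ∀ i : Fin (m+2), dualToPoly a (a.dualBasis i) = X i := by
    intro i
    simp [dualToPoly, Module.Basis.dualBasis_apply, Module.Basis.repr_self, Finsupp.single_apply]
  have hu' : ∀ i : Fin (m+2), dualToPoly a (a'.dualBasis i) = ∑ l, C (A2 i l) * X l := by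
    intro i
    simp [dualToPoly, Module.Basis.dualBasis_apply, hA2, Module.Basis.toMatrix_apply]
  have hsum : ∑ i : Fin (m+2), C (A 0 i) * dualToPoly a (a'.dualBasis i)
      = (X 0 : MvPolynomial (Fin (m+2)) R) := by
    simp only [hu', Finset.mul_sum]
    rw [Finset.sum_comm]
    have h3 : ∀ l : Fin (m+2), (∑ i : Fin (m+2), C (A 0 i) * (C (A2 i l) * X l))
        = C ((A * A2) 0 l) * X l := by
      intro l
      rw [Matrix.mul_apply, map_sum, Finset.sum_mul]
      exact Finset.sum_congr rfl fun i _ => by rw [map_mul]; ring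
    simp [h3, hAA2, Matrix.one_apply, apply_ite (C : R → MvPolynomial (Fin (m+2)) R),
      ite_mul, Finset.sum_ite_eq]
  set v : Fin (m+2) → MvPolynomial (Fin (m+2)) R := fun j => C (A 0 j) with hv
  set w : Fin (m+2) → MvPolynomial (Fin (m+2)) R :=
    fun j => if (0 : Fin (m+2)) = j then 1 else 0 with hw
  have E1 : (Matrix.of (Fin.cons v θ') : Matrix (Fin (m+2)) (Fin (m+2)) _).det
      = -(X 0 * d') := by
    rw [det_cons_expand]
    have h4 : ∀ i : Fin (m+2), (-1 : MvPolynomial (Fin (m+2)) R)^(i:ℕ) * v i *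
        ((θ'.submatrix id i.succAbove).det)
        = -(C (A 0 i) * dualToPoly a (a'.dualBasis i) * d') := by
      intro i
      rw [hd' i]
      have hsgn : (-1 : MvPolynomial (Fin (m+2)) R)^(i:ℕ) * (-1)^((i:ℕ)+1) = -1 := by
        rw [← pow_add]; exact Odd.neg_one_pow ⟨(i:ℕ), by ring⟩
      calc (-1 : MvPolynomial (Fin (m+2)) R)^(i:ℕ) * v i *
            ((-1) ^ ((i : ℕ) + 1) * dualToPoly a (a'.dualBasis i) * d')
          = ((-1 : MvPolynomial (Fin (m+2)) R)^(i:ℕ) * (-1)^((i:ℕ)+1)) *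
            (v i * dualToPoly a (a'.dualBasis i) * d') := by ring
        _ = -(C (A 0 i) * dualToPoly a (a'.dualBasis i) * d') := by rw [hsgn, hv]; ring
    rw [Finset.sum_congr rfl fun i _ => h4 i, Finset.sum_neg_distrib, ← Finset.sum_mul,
      hsum]
  have hvecw : Matrix.vecMul w (A.map (C : R → _)) = v := by
    funext j
    simp [hw, hv, Matrix.vecMul, dotProduct, ite_mul, Matrix.map_apply,
      Finset.sum_ite_eq]
  have E2 : (Matrix.of (Fin.cons v θ') : Matrix (Fin (m+2)) (Fin (m+2)) _)
      = Matrix.of (Fin.cons w ((B.transpose.map (C : R → MvPolynomial (Fin (m+2)) R)) * θ)) * (A.map (C : R → MvPolynomial (Fin (m+2)) R)) := by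
    rw [cons_mul, hvecw, ← hθ'eq]
  have hsub : ∀ i : Fin (m+2), (((B.transpose.map (C : R → MvPolynomial (Fin (m+2)) R)) * θ).submatrix id i.succAbove)
      = (B.transpose.map (C : R → MvPolynomial (Fin (m+2)) R)) * (θ.submatrix id i.succAbove) := by
    intro i
    rw [Matrix.submatrix_mul _ _ id id i.succAbove Function.bijective_id,
      Matrix.submatrix_id_id]
  have hdetB : ((B.transpose.map (C : R → MvPolynomial (Fin (m+2)) R)).det) = C B.det :=
    ((RingHom.map_det (C : R →+* MvPolynomial (Fin (m+2)) R) B.transpose).symm).trans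
      (by rw [Matrix.det_transpose])
  have hdetA : ((A.map (C : R → MvPolynomial (Fin (m+2)) R)).det) = C A.det :=
    (RingHom.map_det (C : R →+* MvPolynomial (Fin (m+2)) R) A).symm
  have E3 : (Matrix.of (Fin.cons w ((B.transpose.map (C : R → MvPolynomial (Fin (m+2)) R)) * θ)) :
      Matrix (Fin (m+2)) (Fin (m+2)) _).det = -(C B.det * (X 0 * d)) := by
    rw [det_cons_expand]
    have h5 : ∀ i : Fin (m+2), (-1 : MvPolynomial (Fin (m+2)) R)^(i:ℕ) * w i *
        ((((B.transpose.map (C : R → MvPolynomial (Fin (m+2)) R)) * θ).submatrix id i.succAbove).det)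
        = (if (0:Fin (m+2)) = i then (-1:MvPolynomial (Fin (m+2)) R)^(i:ℕ) *
            (C B.det * ((-1)^((i:ℕ)+1) * X i * d)) else 0) := by
      intro i
      rw [hsub i, Matrix.det_mul, hdetB, hd i, hXi i, hw]
      by_cases h : (0:Fin (m+2)) = i <;> simp [h]
    rw [Finset.sum_congr rfl fun i _ => h5 i, Finset.sum_ite_eq]
    simp only [Finset.mem_univ, if_true, Fin.val_zero, pow_zero, pow_one, one_mul]
    ring
  have key : -(X 0 * d') = -(C B.det * (X 0 * d)) * C A.det := by
    rw [← E1, E2, Matrix.det_mul, E3, hdetA]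
  have hX0 : (X 0 : MvPolynomial (Fin (m+2)) R) ≠ 0 := MvPolynomial.X_ne_zero 0
  apply mul_left_cancel₀ hX0
  linear_combination -key
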